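/- Let X be a connected scheme, let P be an X-scheme whose underlying topological space has open connected components (e.g., P locally noetherian), and let G be a finite (abstract) group acting on P by X-automorphisms such that the canonical morphism ⨿_{g ∈ G} P → P ×_X P, whose g-th component is (id_P, g·) : P → P ×_X P, is an isomorphism (i.e., P is a G-torsor over X). Let p be a point of P, let Q be the connected component of P containing p, and let H = {g ∈ G : g·Q = Q} be the subgroup of G stabilizing Q. Then the analogous canonical morphism ⨿_{h ∈ H} Q → Q ×_X Q is an isomorphism; that is, Q with the restricted H-action is an H-torsor over X. -/

import Mathlib

open AlgebraicGeometry CategoryTheory Limits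

set_option maxHeartbeats 1000000

universe u

section Aux

lemma exists_sigmaι_eq {ι : Type u} (A : ι → Scheme.{u}) (w : (∐ A : Scheme.{u})) :
    ∃ i y, (Sigma.ι A i).base y = w := by
  obtain ⟨⟨i, y⟩, rfl⟩ := (sigmaMk A).surjective w
  exact ⟨i, y, (sigmaMk_mk A i y).symm⟩

/-- The range of `Sigma.desc g` is the union of the ranges of the `g i`. -/
lemma range_sigmaDesc_aux {ι : Type u} {A : ι → Scheme.{u}} {Z : Scheme.{u}}
    (g : ∀ i, A i ⟶ Z) :
    Set.range (Sigma.desc g).base = ⋃ i, Set.range (g i).base := by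
  ext z
  constructor
  · rintro ⟨w, rfl⟩
    obtain ⟨i, y, rfl⟩ := exists_sigmaι_eq A w
    refine Set.mem_iUnion.mpr ⟨i, ⟨y, ?_⟩⟩
    rw [← Scheme.Hom.comp_apply, Sigma.ι_desc]
  · intro hz
    obtain ⟨i, y, rfl⟩ : ∃ i y, (g i).base y = z := by
      obtain ⟨i, hi⟩ := Set.mem_iUnion.mp hz
      obtain ⟨y, hy⟩ := hi
      exact ⟨i, y, hy⟩
    exact ⟨(Sigma.ι A i).base y, by rw [← Scheme.Hom.comp_apply, Sigma.ι_desc]⟩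

/-- A coproduct of open immersions with pairwise disjoint ranges is an open immersion. -/
lemma isOpenImmersion_sigmaDesc_aux {ι : Type u} {A : ι → Scheme.{u}} {Z : Scheme.{u}}
    (g : ∀ i, A i ⟶ Z) [∀ i, IsOpenImmersion (g i)]
    (hdisj : ∀ i j, i ≠ j →
      Disjoint (Set.range (g i).base) (Set.range (g j).base)) :
    IsOpenImmersion (Sigma.desc g) := by
  have happ : ∀ i y, (Sigma.desc g).base ((Sigma.ι A i).base y) = (g i).base y := by
    intro i y
    rw [← Scheme.Hom.comp_apply, Sigma.ι_desc]
  have hinj : Function.Injective (Sigma.desc g).base := by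
    intro a b hab
    obtain ⟨i, y, rfl⟩ := exists_sigmaι_eq A a
    obtain ⟨j, w, rfl⟩ := exists_sigmaι_eq A b
    rw [happ, happ] at hab
    by_cases hij : i = j
    · subst hij
      rw [(g i).isOpenEmbedding.injective hab]
    · exact ((Set.disjoint_left.mp (hdisj i j hij)) ⟨y, rfl⟩ ⟨w, hab.symm⟩).elim
  have hopen : IsOpenMap (Sigma.desc g).base := by
    intro U hU
    have himg : (Sigma.desc g).base '' U =
        ⋃ i, (g i).base '' ((Sigma.ι A i).base ⁻¹' U) := by
      ext z
      constructor
      · rintro ⟨w, hw, rfl⟩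
        obtain ⟨i, y, rfl⟩ := exists_sigmaι_eq A w
        exact Set.mem_iUnion.mpr ⟨i, y, hw, (happ i y).symm⟩
      · intro hz
        obtain ⟨i, hi⟩ := Set.mem_iUnion.mp hz
        obtain ⟨y, hy, rfl⟩ := hi
        exact ⟨(Sigma.ι A i).base y, hy, happ i y⟩
    rw [himg]
    exact isOpen_iUnion fun i => (g i).isOpenEmbedding.isOpenMap _
      ((Sigma.ι A i).continuous.isOpen_preimage U hU)
  haveI hstalk : ∀ x, IsIso ((Sigma.desc g).stalkMap x) := by
    intro x
    obtain ⟨i, y, rfl⟩ := exists_sigmaι_eq A x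
    have h1 : IsIso ((Sigma.ι A i ≫ Sigma.desc g).stalkMap y) := by
      rw [Sigma.ι_desc]; infer_instance
    rw [Scheme.Hom.stalkMap_comp] at h1
    exact @IsIso.of_isIso_comp_right _ _ _ _ _ _ ((Sigma.ι A i).stalkMap y) _ h1
  exact IsOpenImmersion.of_isIso_stalkMap _
    (Topology.IsOpenEmbedding.of_continuous_injective_isOpenMap
      (Sigma.desc g).continuous hinj hopen)

/-- If `T ≫ F = M ≫ ι'` with `F` an isomorphism, `T` and `ι'` open immersions, and
`T ≫ F` and `ι'` have the same range, then `M` is an isomorphism. -/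
lemma isIso_of_sandwich {A B C D : Scheme.{u}} (M : A ⟶ B) (T : A ⟶ C) (F : C ⟶ D)
    (ι' : B ⟶ D) [IsIso F] [IsOpenImmersion T] [IsOpenImmersion ι']
    (comm : T ≫ F = M ≫ ι')
    (hrange : Set.range (T ≫ F).base = Set.range ι'.base) : IsIso M := by
  have e : Set.range T.base = Set.range (ι' ≫ inv F).base := by
    have h1 : (T ≫ F) ≫ inv F = T := by simp
    calc Set.range T.base = Set.range ((T ≫ F) ≫ inv F).base := by rw [h1]
      _ = (inv F).base '' Set.range (T ≫ F).base := by
          rw [Scheme.Hom.comp_base, TopCat.coe_comp, Set.range_comp]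
      _ = (inv F).base '' Set.range ι'.base := by rw [hrange]
      _ = Set.range (ι' ≫ inv F).base := by
          rw [Scheme.Hom.comp_base, TopCat.coe_comp, Set.range_comp]
  have hM : M = IsOpenImmersion.lift (ι' ≫ inv F) T (le_of_eq e) := by
    apply IsOpenImmersion.lift_uniq
    rw [← Category.assoc, ← comm, Category.assoc]
    simp
  rw [hM]
  exact inferInstanceAs
    (IsIso (IsOpenImmersion.isoOfRangeEq T (ι' ≫ inv F) e).hom)

end Aux

/-- Let `X` be a connected scheme and `P` an `X`-scheme (structure morphism `f`) whose
underlying space has open connected components.  Let a finite (abstract) group `G` act on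
`P` by `X`-automorphisms (via `ρ : G →* Aut P` with `(ρ g).hom ≫ f = f`), in such a way
that the canonical morphism `∐_{g ∈ G} P ⟶ P ×_X P`, whose `g`-th component is
`(id_P, g·)`, is an isomorphism (i.e. `P` is a `G`-torsor over `X`).  Let `p` be a point
of `P`, let `Q` be the connected component of `P` containing `p` (an open subscheme), and
let `H = {g : G | g · Q = Q}` be the subgroup of `G` stabilizing `Q`; for `h ∈ H` let
`qAct h : Q ⟶ Q` be the restriction of the automorphism `ρ h` to `Q` (characterized by
`qAct h ≫ Q.ι = Q.ι ≫ (ρ h).hom`).  Then the analogous canonical morphism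
`∐_{h ∈ H} Q ⟶ Q ×_X Q` is an isomorphism; that is, `Q` with the restricted `H`-action
is an `H`-torsor over `X`. -/
theorem component_isTorsor_of_torsor {G : Type u} [Group G] [Finite G]
    {P X : Scheme.{u}} [ConnectedSpace X] (f : P ⟶ X)
    (hcomponents : ∀ y : P, IsOpen (connectedComponent y))
    (ρ : G →* Aut P) (hf : ∀ g : G, (ρ g).hom ≫ f = f)
    (htorsor : IsIso (Sigma.desc (fun g : G =>
      (pullback.lift (𝟙 P) (ρ g).hom (by rw [Category.id_comp, hf]) :
        P ⟶ pullback f f))))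
    (p : P) (Q : P.Opens) (hQ : (Q : Set P) = connectedComponent p)
    (qAct : ∀ _ : {g : G // (ρ g).hom.base '' (Q : Set P) = (Q : Set P)},
      Q.toScheme ⟶ Q.toScheme)
    (hqAct : ∀ h, qAct h ≫ Q.ι = Q.ι ≫ (ρ h.1).hom) :
    IsIso (Sigma.desc (fun h : {g : G // (ρ g).hom.base '' (Q : Set P) = (Q : Set P)} =>
      (pullback.lift (𝟙 Q.toScheme) (qAct h)
        (by rw [Category.id_comp, ← Category.assoc, hqAct h, Category.assoc, hf]) :
        Q.toScheme ⟶ pullback (Q.ι ≫ f) (Q.ι ≫ f)))) := by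
  classical
  -- Notation
  let Hty : Type u := {g : G // (ρ g).hom.base '' (Q : Set P) = (Q : Set P)}
  -- The torsor isomorphism for `P`.
  let F : (∐ fun _ : G => P) ⟶ pullback f f :=
    Sigma.desc (fun g : G =>
      (pullback.lift (𝟙 P) (ρ g).hom (by rw [Category.id_comp, hf]) :
        P ⟶ pullback f f))
  haveI hFiso : IsIso F := htorsor
  -- The open immersion `Q ×_X Q ⟶ P ×_X P`.
  let ι' : pullback (Q.ι ≫ f) (Q.ι ≫ f) ⟶ pullback f f :=
    pullback.map (Q.ι ≫ f) (Q.ι ≫ f) f f Q.ι Q.ι (𝟙 X)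
      (Category.comp_id _) (Category.comp_id _)
  haveI hι' : IsOpenImmersion ι' := by
    dsimp only [ι']
    infer_instance
  -- The open immersion `∐_H Q ⟶ ∐_G P`.
  let T : (∐ fun _ : Hty => Q.toScheme) ⟶ (∐ fun _ : G => P) :=
    Sigma.desc (fun h : Hty => Q.ι ≫ Sigma.ι (fun _ : G => P) h.1)
  haveI hT : IsOpenImmersion T := by
    apply isOpenImmersion_sigmaDesc_aux
    intro i j hij
    rw [Set.disjoint_left]
    rintro z ⟨a, rfl⟩ ⟨b, hb⟩
    rw [Scheme.Hom.comp_apply, Scheme.Hom.comp_apply] at hb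
    have hmk := (sigmaι_eq_iff _ _ _ _ _).mp hb
    exact hij (Subtype.ext ((Sigma.mk.inj_iff.mp hmk).1).symm)
  -- Components of `T ≫ F`.
  have eTF : ∀ h : Hty, Sigma.ι (fun _ : Hty => Q.toScheme) h ≫ (T ≫ F) =
      Q.ι ≫ (pullback.lift (𝟙 P) (ρ h.1).hom (by rw [Category.id_comp, hf]) :
        P ⟶ pullback f f) := by
    intro h
    rw [← Category.assoc]
    show (Sigma.ι _ h ≫ Sigma.desc _) ≫ F = _
    rw [Sigma.ι_desc, Category.assoc]
    show Q.ι ≫ (Sigma.ι (fun _ : G => P) h.1 ≫ Sigma.desc _) = _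
    rw [Sigma.ι_desc]
  -- Membership of `Q.ι` images.
  have hmemQ : ∀ y : Q.toScheme, Q.ι.base y ∈ (Q : Set P) := by
    intro y
    have : Q.ι.base y ∈ Set.range Q.ι.base := ⟨y, rfl⟩
    rwa [Scheme.Opens.range_ι] at this
  -- The stabilizer condition from connectedness.
  have hstab : ∀ (g : G) (x : P), x ∈ (Q : Set P) → (ρ g).hom.base x ∈ (Q : Set P) →
      (ρ g).hom.base '' (Q : Set P) = (Q : Set P) := by
    intro g x hx hgx
    have hc : Continuous (ρ g).hom.base := (ρ g).hom.continuous
    have hc' : Continuous (ρ g).inv.base := (ρ g).inv.continuous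
    have hQx : (Q : Set P) = connectedComponent x := by
      rw [hQ] at hx ⊢
      exact connectedComponent_eq hx
    have hQgx : (Q : Set P) = connectedComponent ((ρ g).hom.base x) := by
      rw [hQ] at hgx ⊢
      exact connectedComponent_eq hgx
    have hinvhom : ∀ y : P, (ρ g).inv.base ((ρ g).hom.base y) = y := by
      intro y
      rw [← Scheme.Hom.comp_apply, show (ρ g).hom ≫ (ρ g).inv = 𝟙 P from Iso.hom_inv_id _]
      simp
    have hhominv : ∀ y : P, (ρ g).hom.base ((ρ g).inv.base y) = y := by
      intro y
      rw [← Scheme.Hom.comp_apply, show (ρ g).inv ≫ (ρ g).hom = 𝟙 P from Iso.inv_hom_id _]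
      simp
    apply Set.Subset.antisymm
    · -- forward image
      rintro z ⟨y, hy, rfl⟩
      have h1 : (ρ g).hom.base '' connectedComponent x ⊆
          connectedComponent ((ρ g).hom.base x) :=
        hc.image_connectedComponent_subset x
      have : (ρ g).hom.base y ∈ connectedComponent ((ρ g).hom.base x) :=
        h1 ⟨y, by rwa [← hQx], rfl⟩
      rwa [← hQgx] at this
    · -- backward image
      intro z hz
      have h1 : (ρ g).inv.base '' connectedComponent ((ρ g).hom.base x) ⊆
          connectedComponent ((ρ g).inv.base ((ρ g).hom.base x)) :=
        hc'.image_connectedComponent_subset _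
      have hzin : (ρ g).inv.base z ∈ connectedComponent ((ρ g).inv.base ((ρ g).hom.base x)) :=
        h1 ⟨z, by rwa [← hQgx], rfl⟩
      rw [hinvhom x, ← hQx] at hzin
      exact ⟨(ρ g).inv.base z, hzin, hhominv z⟩
  -- Range of `ι'`.
  have hι'range : Set.range ι'.base =
      (pullback.fst f f).base ⁻¹' (Q : Set P) ∩ (pullback.snd f f).base ⁻¹' (Q : Set P) := by
    show Set.range (pullback.map (Q.ι ≫ f) (Q.ι ≫ f) f f Q.ι Q.ι (𝟙 X)
      (Category.comp_id _) (Category.comp_id _)).base = _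
    rw [Scheme.Pullback.range_map]
    rw [Scheme.Opens.range_ι]
  -- Surjectivity of `F`.
  have hFsurj : Function.Surjective F.base := by
    intro z
    refine ⟨(inv F).base z, ?_⟩
    rw [← Scheme.Hom.comp_apply, IsIso.inv_hom_id]
    simp
  -- The key range computation.
  have hrange : Set.range (T ≫ F).base = Set.range ι'.base := by
    rw [hι'range]
    ext z
    constructor
    · rintro ⟨w, rfl⟩
      obtain ⟨h, y, rfl⟩ := exists_sigmaι_eq _ w
      rw [← Scheme.Hom.comp_apply, eTF h]
      have e1 : (Q.ι ≫ (pullback.lift (𝟙 P) (ρ h.1).hom (by rw [Category.id_comp, hf]) :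
          P ⟶ pullback f f)) ≫ pullback.fst f f = Q.ι := by
        rw [Category.assoc, pullback.lift_fst, Category.comp_id]
      have e2 : (Q.ι ≫ (pullback.lift (𝟙 P) (ρ h.1).hom (by rw [Category.id_comp, hf]) :
          P ⟶ pullback f f)) ≫ pullback.snd f f = Q.ι ≫ (ρ h.1).hom := by
        rw [Category.assoc, pullback.lift_snd]
      constructor
      · show (pullback.fst f f).base _ ∈ (Q : Set P)
        rw [← Scheme.Hom.comp_apply, e1]
        exact hmemQ y
      · show (pullback.snd f f).base _ ∈ (Q : Set P)
        rw [← Scheme.Hom.comp_apply, e2, Scheme.Hom.comp_apply]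
        have hmem := Set.mem_image_of_mem (ρ h.1).hom.base (hmemQ y)
        rwa [h.2] at hmem
    · rintro ⟨h1, h2⟩
      obtain ⟨w, rfl⟩ := hFsurj z
      obtain ⟨g, x, rfl⟩ := exists_sigmaι_eq _ w
      have eF : Sigma.ι (fun _ : G => P) g ≫ F =
          (pullback.lift (𝟙 P) (ρ g).hom (by rw [Category.id_comp, hf]) :
            P ⟶ pullback f f) := Sigma.ι_desc _ _
      have hfst : (pullback.fst f f).base (F.base ((Sigma.ι (fun _ : G => P) g).base x)) = x := by
        rw [← Scheme.Hom.comp_apply, ← Scheme.Hom.comp_apply,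
          ← Category.assoc, eF, pullback.lift_fst]
        simp
      have hsnd : (pullback.snd f f).base (F.base ((Sigma.ι (fun _ : G => P) g).base x)) =
          (ρ g).hom.base x := by
        rw [← Scheme.Hom.comp_apply, ← Scheme.Hom.comp_apply,
          ← Category.assoc, eF, pullback.lift_snd]
      rw [Set.mem_preimage, hfst] at h1
      rw [Set.mem_preimage, hsnd] at h2
      have hgH : (ρ g).hom.base '' (Q : Set P) = (Q : Set P) := hstab g x h1 h2
      obtain ⟨y, hy⟩ : ∃ y : Q.toScheme, Q.ι.base y = x := by
        have : x ∈ Set.range Q.ι.base := by rw [Scheme.Opens.range_ι]; exact h1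
        exact this
      refine ⟨(Sigma.ι (fun _ : Hty => Q.toScheme) ⟨g, hgH⟩).base y, ?_⟩
      rw [← Scheme.Hom.comp_apply, eTF ⟨g, hgH⟩, Scheme.Hom.comp_apply, hy,
        ← Scheme.Hom.comp_apply, eF]
  -- Commutativity: `T ≫ F = M ≫ ι'`.
  have comm : T ≫ F = (Sigma.desc (fun h : Hty =>
      (pullback.lift (𝟙 Q.toScheme) (qAct h)
        (by rw [Category.id_comp, ← Category.assoc, hqAct h, Category.assoc, hf]) :
        Q.toScheme ⟶ pullback (Q.ι ≫ f) (Q.ι ≫ f)))) ≫ ι' := by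
    apply Sigma.hom_ext
    intro h
    rw [eTF h, ← Category.assoc, Sigma.ι_desc]
    apply pullback.hom_ext
    · rw [Category.assoc, Category.assoc, pullback.lift_fst]
      show Q.ι ≫ 𝟙 P = _
      rw [Category.comp_id]
      dsimp only [ι']
      rw [pullback.lift_fst, ← Category.assoc, pullback.lift_fst, Category.id_comp]
    · rw [Category.assoc, Category.assoc, pullback.lift_snd]
      dsimp only [ι']
      rw [pullback.lift_snd, ← Category.assoc, pullback.lift_snd, hqAct h]
  exact isIso_of_sandwich _ T F ι' comm hrange
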